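/- Let N ≥ 1 and let v, w : (Fin N ⊕ Fin N) → ℤ be integer vectors. Then there exists a matrix M in the integral symplectic group Sp(2N,ℤ) with M.mulVec v = w if and only if the (nonnegative) greatest common divisor of the entries of v equals the greatest common divisor of the entries of w. In particular every Sp(2N,ℤ)-orbit on ℤ^{2N} contains the vector whose first entry is the gcd of the entries and whose other entries are 0. -/

import Mathlib

open Matrix

namespace SympOrbit

variable {N : ℕ}

/-! ### Basic `Matrix.single` lemmas -/

lemma transpose_std {n : Type*} [DecidableEq n] (i j : n) (c : ℤ) :
    (Matrix.single i j c)ᵀ = Matrix.single j i c := by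
  ext a b
  simp only [transpose_apply, Matrix.single, of_apply]
  by_cases h1 : i = b <;> by_cases h2 : j = a <;> simp [h1, h2]

lemma std_mul_of_ne {n : Type*} [DecidableEq n] [Fintype n] {i j k l : n} (h : j ≠ k)
    (c d : ℤ) : Matrix.single i j c * Matrix.single k l d = 0 :=
  Matrix.single_mul_single_of_ne (c := c) _ _ _ h _

/-! ### The orbit relation -/

/-- The orbit relation for the symplectic group action. -/
def Rel (N : ℕ) (v w : (Fin N ⊕ Fin N) → ℤ) : Prop :=
  ∃ M ∈ Matrix.symplecticGroup (Fin N) ℤ, M.mulVec v = w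

lemma Rel.refl (v : (Fin N ⊕ Fin N) → ℤ) : Rel N v v :=
  ⟨1, one_mem _, Matrix.one_mulVec v⟩

lemma Rel.trans {u v w : (Fin N ⊕ Fin N) → ℤ} (h1 : Rel N u v) (h2 : Rel N v w) :
    Rel N u w := by
  obtain ⟨M1, hM1, rfl⟩ := h1
  obtain ⟨M2, hM2, rfl⟩ := h2
  exact ⟨M2 * M1, mul_mem hM2 hM1, by rw [← Matrix.mulVec_mulVec]⟩

lemma Rel.symm {v w : (Fin N ⊕ Fin N) → ℤ} (h : Rel N v w) : Rel N w v := by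
  obtain ⟨M, hM, rfl⟩ := h
  refine ⟨M⁻¹, ?_, ?_⟩
  · rw [SymplecticGroup.inv_eq_symplectic_inv M hM]
    exact mul_mem (mul_mem (SymplecticGroup.neg_mem (SymplecticGroup.J_mem _ _))
      (SymplecticGroup.transpose_mem hM)) (SymplecticGroup.J_mem _ _)
  · rw [Matrix.mulVec_mulVec, Matrix.nonsing_inv_mul _ (SymplecticGroup.symplectic_det hM),
      Matrix.one_mulVec]

lemma int_gcd_nonneg {β : Type*} (s : Finset β) (f : β → ℤ) : 0 ≤ s.gcd f := by
  rw [← Finset.normalize_gcd, ← Int.abs_eq_normalize]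
  exact abs_nonneg _

lemma gcd_dvd_gcd_mulVec (M : Matrix (Fin N ⊕ Fin N) (Fin N ⊕ Fin N) ℤ)
    (v : (Fin N ⊕ Fin N) → ℤ) :
    Finset.univ.gcd v ∣ Finset.univ.gcd (M.mulVec v) := by
  refine Finset.dvd_gcd fun k _ => ?_
  show Finset.univ.gcd v ∣ ∑ j, M k j * v j
  exact Finset.dvd_sum fun j _ => Dvd.dvd.mul_left (Finset.gcd_dvd (Finset.mem_univ j)) _

lemma Rel.gcd_eq {v w : (Fin N ⊕ Fin N) → ℤ} (h : Rel N v w) :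
    Finset.univ.gcd v = Finset.univ.gcd w := by
  have h' := h.symm
  obtain ⟨M, hM, rfl⟩ := h
  obtain ⟨M', hM', hw⟩ := h'
  refine Int.dvd_antisymm (int_gcd_nonneg _ _) (int_gcd_nonneg _ _)
    (gcd_dvd_gcd_mulVec M v) ?_
  conv_rhs => rw [← hw]
  exact gcd_dvd_gcd_mulVec M' _

/-! ### Bezout data -/

lemma bezout (a b : ℤ) : ∃ p q r s : ℤ,
    p * s - q * r = 1 ∧ p * a + q * b = Int.gcd a b ∧ r * a + s * b = 0 := by
  rcases eq_or_ne (Int.gcd a b) 0 with h0 | h0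
  · obtain ⟨ha, hb⟩ := Int.gcd_eq_zero_iff.mp h0
    exact ⟨1, 0, 0, 1, by ring, by simp [ha, hb, h0], by simp [ha, hb]⟩
  · have hgne : (Int.gcd a b : ℤ) ≠ 0 := Int.natCast_ne_zero.mpr h0
    obtain ⟨a', ha'⟩ := (Int.gcd_dvd_left a b : (Int.gcd a b : ℤ) ∣ a)
    obtain ⟨b', hb'⟩ := (Int.gcd_dvd_right a b : (Int.gcd a b : ℤ) ∣ b)
    have hbez : (Int.gcd a b : ℤ) = a * Int.gcdA a b + b * Int.gcdB a b :=
      Int.gcd_eq_gcd_ab a b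
    refine ⟨Int.gcdA a b, Int.gcdB a b, -b', a', ?_, by linarith [hbez],
      by linear_combination a' * hb' - b' * ha'⟩
    apply mul_left_cancel₀ hgne
    linear_combination (-Int.gcdA a b) * ha' + (-Int.gcdB a b) * hb' - hbez

/-! ### The generator `M1`: an `SL₂` block on the hyperbolic pair `(inl i, inr i)` -/

def Amat (i : Fin N) (α β : ℤ) : Matrix (Fin N) (Fin N) ℤ :=
  α • (1 : Matrix (Fin N) (Fin N) ℤ) + β • Matrix.single i i (1 : ℤ)

lemma Amat_mul (i : Fin N) (α β γ δ : ℤ) :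
    Amat i α β * Amat i γ δ = Amat i (α * γ) (α * δ + β * γ + β * δ) := by
  simp only [Amat, add_mul, mul_add, smul_mul_assoc, mul_smul_comm, one_mul, mul_one,
    Matrix.single_mul_single_same]
  module

lemma Amat_transpose (i : Fin N) (α β : ℤ) : (Amat i α β)ᵀ = Amat i α β := by
  simp [Amat, transpose_add, transpose_smul, transpose_one, transpose_std]

lemma Amat_add (i : Fin N) (α β γ δ : ℤ) :
    Amat i α β + Amat i γ δ = Amat i (α + γ) (β + δ) := by
  simp only [Amat]; module

lemma Amat_neg (i : Fin N) (α β : ℤ) : -Amat i α β = Amat i (-α) (-β) := by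
  simp only [Amat]; module

def M1 (i : Fin N) (p q r s : ℤ) : Matrix (Fin N ⊕ Fin N) (Fin N ⊕ Fin N) ℤ :=
  fromBlocks (Amat i 1 (p - 1)) (Amat i 0 q) (Amat i 0 r) (Amat i 1 (s - 1))

lemma M1_mem (i : Fin N) (p q r s : ℤ) (h : p * s - q * r = 1) :
    M1 i p q r s ∈ Matrix.symplecticGroup (Fin N) ℤ := by
  rw [SymplecticGroup.mem_iff, Matrix.J, M1, fromBlocks_transpose, fromBlocks_multiply,
    fromBlocks_multiply]
  simp only [Matrix.mul_zero, Matrix.zero_mul, Matrix.mul_neg, Matrix.mul_one, Matrix.neg_mul,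
    Matrix.one_mul, zero_add, add_zero, Amat_transpose, Amat_mul]
  rw [show (0 : Matrix (Fin N) (Fin N) ℤ) = Amat i 0 0 by simp [Amat],
    show (1 : Matrix (Fin N) (Fin N) ℤ) = Amat i 1 0 by simp [Amat]]
  simp only [Amat_neg, Amat_add]
  have h1 : (1:ℤ) - p * s + q * r = 0 := by linarith
  have h2 : (-1:ℤ) + p * s - q * r = 0 := by linarith
  ring_nf
  rw [h1, h2]

lemma M1_mulVec (i : Fin N) (p q r s : ℤ) (v : (Fin N ⊕ Fin N) → ℤ) :
    (M1 i p q r s).mulVec v = fun k =>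
      if k = Sum.inl i then p * v (Sum.inl i) + q * v (Sum.inr i)
      else if k = Sum.inr i then r * v (Sum.inl i) + s * v (Sum.inr i)
      else v k := by
  funext k
  rcases k with k | k <;>
    simp only [M1, fromBlocks_mulVec, Sum.elim_inl, Sum.elim_inr, Amat, add_mulVec,
      smul_mulVec, one_mulVec, single_mulVec, Pi.add_apply, Pi.smul_apply,
      smul_eq_mul, Function.comp_apply, one_mul, Sum.inl.injEq, Sum.inr.injEq] <;>
    by_cases hk : k = i <;>
    simp [Function.update, hk] <;> ring

/-! ### The generator `M2`: an `SL₂` block on `(inl i, inl j)` with compensation on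
`(inr i, inr j)` -/

def Bmat (i j : Fin N) (α β γ δ ε : ℤ) : Matrix (Fin N) (Fin N) ℤ :=
  α • (1 : Matrix (Fin N) (Fin N) ℤ) + β • Matrix.single i i (1 : ℤ)
    + γ • Matrix.single i j (1 : ℤ) + δ • Matrix.single j i (1 : ℤ)
    + ε • Matrix.single j j (1 : ℤ)

lemma Bmat_mul (i j : Fin N) (hij : i ≠ j) (a b c d e a' b' c' d' e' : ℤ) :
    Bmat i j a b c d e * Bmat i j a' b' c' d' e' =
      Bmat i j (a * a') (a * b' + b * a' + b * b' + c * d')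
        (a * c' + c * a' + b * c' + c * e') (a * d' + d * a' + d * b' + e * d')
        (a * e' + e * a' + d * c' + e * e') := by
  simp only [Bmat, add_mul, mul_add, smul_mul_assoc, mul_smul_comm, one_mul, mul_one,
    Matrix.single_mul_single_same, std_mul_of_ne hij, std_mul_of_ne hij.symm,
    smul_zero, add_zero, zero_add]
  module

lemma Bmat_transpose (i j : Fin N) (a b c d e : ℤ) :
    (Bmat i j a b c d e)ᵀ = Bmat i j a b d c e := by
  simp only [Bmat, transpose_add, transpose_smul, transpose_one, transpose_std]
  module

lemma Bmat_neg (i j : Fin N) (a b c d e : ℤ) :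
    -Bmat i j a b c d e = Bmat i j (-a) (-b) (-c) (-d) (-e) := by
  simp only [Bmat]; module

def M2 (i j : Fin N) (p q r s : ℤ) : Matrix (Fin N ⊕ Fin N) (Fin N ⊕ Fin N) ℤ :=
  fromBlocks (Bmat i j 1 (p - 1) q r (s - 1)) 0 0 (Bmat i j 1 (s - 1) (-r) (-q) (p - 1))

lemma M2_mem (i j : Fin N) (hij : i ≠ j) (p q r s : ℤ) (h : p * s - q * r = 1) :
    M2 i j p q r s ∈ Matrix.symplecticGroup (Fin N) ℤ := by
  rw [SymplecticGroup.mem_iff, Matrix.J, M2, fromBlocks_transpose, fromBlocks_multiply,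
    fromBlocks_multiply]
  simp only [Matrix.mul_zero, Matrix.zero_mul, Matrix.mul_neg, Matrix.mul_one, Matrix.neg_mul,
    Matrix.one_mul, zero_add, add_zero, transpose_zero, neg_zero,
    Bmat_transpose, Bmat_mul i j hij, Bmat_neg]
  rw [show (1 : Matrix (Fin N) (Fin N) ℤ) = Bmat i j 1 0 0 0 0 by simp [Bmat]]
  have h1 : (1:ℤ) - s * p + q * r = 0 := by linarith
  have h2 : (-1:ℤ) + s * p - q * r = 0 := by linarith
  ring_nf
  rw [h1, h2, Bmat_neg]
  norm_num

lemma M2_mulVec (i j : Fin N) (hij : i ≠ j) (p q r s : ℤ) (v : (Fin N ⊕ Fin N) → ℤ) :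
    (M2 i j p q r s).mulVec v = fun k =>
      if k = Sum.inl i then p * v (Sum.inl i) + q * v (Sum.inl j)
      else if k = Sum.inl j then r * v (Sum.inl i) + s * v (Sum.inl j)
      else if k = Sum.inr i then s * v (Sum.inr i) - r * v (Sum.inr j)
      else if k = Sum.inr j then -(q * v (Sum.inr i)) + p * v (Sum.inr j)
      else v k := by
  funext k
  rcases k with k | k <;>
    simp only [M2, fromBlocks_mulVec, Sum.elim_inl, Sum.elim_inr, Bmat, add_mulVec,
      smul_mulVec, one_mulVec, single_mulVec, zero_mulVec, Pi.add_apply,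
      Pi.smul_apply, smul_eq_mul, Function.comp_apply, one_mul, Sum.inl.injEq, Sum.inr.injEq,
      add_zero, zero_add, Sum.inl.injEq] <;>
    by_cases hki : k = i <;> by_cases hkj : k = j <;>
    first
      | (exact absurd (hki.symm.trans hkj) hij)
      | (simp [Function.update, hki, hkj, hij, Ne.symm hij] <;> ring)

/-! ### The two reduction steps -/

lemma step1 (i : Fin N) (v : (Fin N ⊕ Fin N) → ℤ) :
    Rel N v (fun k =>
      if k = Sum.inl i then (Int.gcd (v (Sum.inl i)) (v (Sum.inr i)) : ℤ)
      else if k = Sum.inr i then 0 else v k) := by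
  obtain ⟨p, q, r, s, hdet, hg, hz⟩ := bezout (v (Sum.inl i)) (v (Sum.inr i))
  refine ⟨M1 i p q r s, M1_mem i p q r s hdet, ?_⟩
  rw [M1_mulVec]
  simp only [hg, hz]

lemma step2 (i j : Fin N) (hij : i ≠ j) (v : (Fin N ⊕ Fin N) → ℤ)
    (hbi : v (Sum.inr i) = 0) (hbj : v (Sum.inr j) = 0) :
    Rel N v (fun k =>
      if k = Sum.inl i then (Int.gcd (v (Sum.inl i)) (v (Sum.inl j)) : ℤ)
      else if k = Sum.inl j then 0 else v k) := by
  obtain ⟨p, q, r, s, hdet, hg, hz⟩ := bezout (v (Sum.inl i)) (v (Sum.inl j))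
  refine ⟨M2 i j p q r s, M2_mem i j hij p q r s hdet, ?_⟩
  rw [M2_mulVec i j hij]
  funext k
  simp only [hbi, hbj, hg, hz, mul_zero, sub_zero, neg_zero, add_zero, zero_add]
  split_ifs with h1 h2 h3 h4 <;> simp_all

/-! ### The reduction to a canonical vector -/

lemma phase1 (v : (Fin N ⊕ Fin N) → ℤ) :
    ∃ v', Rel N v v' ∧ ∀ i, v' (Sum.inr i) = 0 := by
  suffices h : ∀ s : Finset (Fin N), ∃ v', Rel N v v' ∧ ∀ i ∈ s, v' (Sum.inr i) = 0 by
    obtain ⟨v', h1, h2⟩ := h Finset.univ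
    exact ⟨v', h1, fun i => h2 i (Finset.mem_univ i)⟩
  intro s
  induction s using Finset.induction with
  | empty => exact ⟨v, Rel.refl v, by simp⟩
  | @insert a t ha ih =>
    obtain ⟨v', h1, h2⟩ := ih
    refine ⟨_, h1.trans (step1 a v'), ?_⟩
    intro i hi
    rcases Finset.mem_insert.mp hi with rfl | hit
    · simp
    · have hne : (Sum.inr i : Fin N ⊕ Fin N) ≠ Sum.inr a := by
        simp only [ne_eq, Sum.inr.injEq]
        rintro rfl; exact ha hit
      simp only [reduceCtorEq, if_false, hne, if_neg hne]
      simpa using h2 i hit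

lemma phase2 (i0 : Fin N) (v : (Fin N ⊕ Fin N) → ℤ) (hb : ∀ i, v (Sum.inr i) = 0) :
    ∃ c : ℤ, 0 ≤ c ∧ Rel N v (fun k => if k = Sum.inl i0 then c else 0) := by
  have main : ∀ s : Finset (Fin N), ∃ v', Rel N v v' ∧ (∀ i, v' (Sum.inr i) = 0) ∧
      ∀ j ∈ s, j ≠ i0 → v' (Sum.inl j) = 0 := by
    intro s
    induction s using Finset.induction with
    | empty => exact ⟨v, Rel.refl v, hb, by simp⟩
    | @insert a t ha ih =>
      obtain ⟨v', h1, h2, h3⟩ := ih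
      by_cases ha0 : a = i0
      · refine ⟨v', h1, h2, ?_⟩
        intro j hj hj0
        rcases Finset.mem_insert.mp hj with rfl | hj
        · exact absurd ha0 hj0
        · exact h3 j hj hj0
      · refine ⟨_, h1.trans (step2 i0 a (fun h => ha0 h.symm) v' (h2 i0) (h2 a)), ?_, ?_⟩
        · intro i; simp only [reduceCtorEq, if_false]; exact h2 i
        · intro j hj hj0
          rcases Finset.mem_insert.mp hj with rfl | hjt
          · have hne : (Sum.inl j : Fin N ⊕ Fin N) ≠ Sum.inl i0 := by
              simpa using ha0
            simp [hne]
          · have hne1 : (Sum.inl j : Fin N ⊕ Fin N) ≠ Sum.inl i0 := by simpa using hj0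
            have hne2 : (Sum.inl j : Fin N ⊕ Fin N) ≠ Sum.inl a := by
              simp only [ne_eq, Sum.inl.injEq]
              rintro rfl; exact ha hjt
            simp only [if_neg hne1, if_neg hne2]
            exact h3 j hjt hj0
  obtain ⟨v', h1, h2, h3⟩ := main Finset.univ
  refine ⟨(Int.gcd (v' (Sum.inl i0)) (v' (Sum.inr i0)) : ℤ), Int.natCast_nonneg _,
    (h1.trans (step1 i0 v')).trans ?_⟩
  have : (fun k =>
      if k = Sum.inl i0 then (Int.gcd (v' (Sum.inl i0)) (v' (Sum.inr i0)) : ℤ)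
      else if k = Sum.inr i0 then 0 else v' k) = fun k =>
      if k = Sum.inl i0 then (Int.gcd (v' (Sum.inl i0)) (v' (Sum.inr i0)) : ℤ) else 0 := by
    funext k
    rcases k with k | k
    · by_cases hk : k = i0
      · simp [hk]
      · have hne : (Sum.inl k : Fin N ⊕ Fin N) ≠ Sum.inl i0 := by simpa using hk
        simp only [if_neg hne, reduceCtorEq, if_false]
        exact h3 k (Finset.mem_univ k) hk
    · by_cases hk : k = i0
      · simp [hk]
      · have hne2 : (Sum.inr k : Fin N ⊕ Fin N) ≠ Sum.inr i0 := by simpa using hk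
        simp only [reduceCtorEq, if_false, if_neg hne2]
        exact h2 k
  rw [this]
  exact Rel.refl _

lemma reduce (i0 : Fin N) (v : (Fin N ⊕ Fin N) → ℤ) :
    ∃ c : ℤ, 0 ≤ c ∧ Rel N v (fun k => if k = Sum.inl i0 then c else 0) := by
  obtain ⟨v', h1, h2⟩ := phase1 v
  obtain ⟨c, hc, h3⟩ := phase2 i0 v' h2
  exact ⟨c, hc, h1.trans h3⟩

lemma gcd_canon (i0 : Fin N) (c : ℤ) (hc : 0 ≤ c) :
    Finset.univ.gcd (fun k : Fin N ⊕ Fin N => if k = Sum.inl i0 then c else 0) = c := by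
  refine Int.dvd_antisymm (int_gcd_nonneg _ _) hc ?_ ?_
  · have := Finset.gcd_dvd (f := fun k : Fin N ⊕ Fin N => if k = Sum.inl i0 then c else 0)
      (Finset.mem_univ (Sum.inl i0))
    simpa using this
  · refine Finset.dvd_gcd fun k _ => ?_
    split_ifs
    · exact dvd_refl c
    · exact dvd_zero c

end SympOrbit

/-- Two integer vectors lie in the same orbit of the integral symplectic group
`Sp(2N,ℤ)` acting on `ℤ^{2N}` by matrix-vector multiplication iff the
(nonnegative) gcds of their entries coincide. -/
theorem symplectic_orbit_iff_gcd {N : ℕ} (hN : 1 ≤ N)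
    (v w : (Fin N ⊕ Fin N) → ℤ) :
    (∃ M ∈ Matrix.symplecticGroup (Fin N) ℤ, M.mulVec v = w) ↔
      Finset.univ.gcd v = Finset.univ.gcd w := by
  constructor
  · intro h
    exact SympOrbit.Rel.gcd_eq h
  · intro h
    obtain ⟨c, hc, hv⟩ := SympOrbit.reduce ⟨0, hN⟩ v
    obtain ⟨d, hd, hw⟩ := SympOrbit.reduce ⟨0, hN⟩ w
    have e1 : Finset.univ.gcd v = c := hv.gcd_eq.trans (SympOrbit.gcd_canon _ c hc)
    have e2 : Finset.univ.gcd w = d := hw.gcd_eq.trans (SympOrbit.gcd_canon _ d hd)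
    have : c = d := by rw [← e1, ← e2, h]
    subst this
    exact hv.trans hw.symm
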